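/- Let Δ = Δ_u be the unnormalized Laplacian of a d-regular undirected weighted graph (so D = dI and Diag(hΔ + iI) = (hd + i)I), let h > 0, and consider the Jacobi approximation scheme with K = 0 iterations applied to f ∈ ℝⁿ. Then ỹ_j = ((hd + i)^{−1}(hΔ − iI))^j f for every j = 0, …, r, and consequently the approximate Cayley filter f ↦ G̃f = c₀ ỹ₀ + 2 Re Σ_{j=1}^r c_j ỹ_j equals q(Δ) f for some real polynomial q of degree at most r; in particular, every real polynomial of Δ of degree at most r (such as a Chebyshev filter) arises as such a zero-iteration Cayley filter. -/

import Mathlib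

open Matrix Complex Finset

noncomputable section

/-- Degree of vertex `i`: sum of weights of edges incident to `i`. -/
def gDegree {n : ℕ} (W : Matrix (Fin n) (Fin n) ℝ) (i : Fin n) : ℝ :=
  ∑ j ∈ Finset.univ.erase i, W i j

/-- Unnormalized graph Laplacian `Δ_u = D − W`. -/
def unLaplacian {n : ℕ} (W : Matrix (Fin n) (Fin n) ℝ) : Matrix (Fin n) (Fin n) ℝ :=
  Matrix.diagonal (gDegree W) - W

/-- Normalized graph Laplacian `Δ_n = I − D^{-1/2} W D^{-1/2}`. -/
def normLaplacian {n : ℕ} (W : Matrix (Fin n) (Fin n) ℝ) : Matrix (Fin n) (Fin n) ℝ :=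
  1 - Matrix.diagonal (fun i => (Real.sqrt (gDegree W i))⁻¹) * W *
      Matrix.diagonal (fun i => (Real.sqrt (gDegree W i))⁻¹)

/-- Complexification of a real matrix. -/
def cplx {n : ℕ} (Δ : Matrix (Fin n) (Fin n) ℝ) : Matrix (Fin n) (Fin n) ℂ :=
  Δ.map Complex.ofReal

/-- The matrix `hΔ − iI`. -/
def cayleyNum {n : ℕ} (Δ : Matrix (Fin n) (Fin n) ℝ) (hz : ℝ) : Matrix (Fin n) (Fin n) ℂ :=
  (hz : ℂ) • cplx Δ - Complex.I • 1

/-- The matrix `hΔ + iI`. -/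
def cayleyDen {n : ℕ} (Δ : Matrix (Fin n) (Fin n) ℝ) (hz : ℝ) : Matrix (Fin n) (Fin n) ℂ :=
  (hz : ℂ) • cplx Δ + Complex.I • 1

/-- The Cayley transform `C(hΔ) = (hΔ − iI)(hΔ + iI)⁻¹` of a scaled matrix. -/
def cayleyOp {n : ℕ} (Δ : Matrix (Fin n) (Fin n) ℝ) (hz : ℝ) : Matrix (Fin n) (Fin n) ℂ :=
  cayleyNum Δ hz * (cayleyDen Δ hz)⁻¹

/-- Cayley filter `g_{c,h}(Δ) = c₀ I + 2 Re { Σ_{j=1}^r c_j (hΔ−iI)^j (hΔ+iI)^{−j} }`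
(entrywise real part). -/
def cayleyFilter {n : ℕ} (Δ : Matrix (Fin n) (Fin n) ℝ) (hz : ℝ) (r : ℕ)
    (c₀ : ℝ) (c : ℕ → ℂ) : Matrix (Fin n) (Fin n) ℝ :=
  c₀ • (1 : Matrix (Fin n) (Fin n) ℝ) +
    (2 : ℝ) • (∑ j ∈ Finset.Icc 1 r,
      c j • (cayleyNum Δ hz ^ j * ((cayleyDen Δ hz)⁻¹) ^ j)).map Complex.re

/-- Euclidean (`L₂`) norm of a finite signal. -/
def l2norm {n : ℕ} {𝕜 : Type*} [RCLike 𝕜] (v : Fin n → 𝕜) : ℝ :=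
  Real.sqrt (∑ i, ‖v i‖ ^ 2)

/-- Operator norm induced by the Euclidean norm. -/
def l2opNorm {n : ℕ} (A : Matrix (Fin n) (Fin n) ℂ) : ℝ :=
  sSup {t : ℝ | ∃ x : Fin n → ℂ, l2norm x = 1 ∧ t = l2norm (A *ᵥ x)}

/-- Maximum-row-sum norm `‖A‖_∞ = max_i Σ_k |a_{ik}|`. -/
def rowSumNorm {n : ℕ} (A : Matrix (Fin n) (Fin n) ℂ) : ℝ :=
  sSup (Set.range fun i => ∑ k, ‖A i k‖)

/-- Diagonal part `Diag(A)` of a matrix. -/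
def diagPart {n : ℕ} (A : Matrix (Fin n) (Fin n) ℂ) : Matrix (Fin n) (Fin n) ℂ :=
  Matrix.diagonal fun i => A i i

/-- Off-diagonal part `Off(A) = A − Diag(A)` of a matrix. -/
def offPart {n : ℕ} (A : Matrix (Fin n) (Fin n) ℂ) : Matrix (Fin n) (Fin n) ℂ :=
  A - diagPart A

/-- Jacobi iteration matrix `J = −Diag(A)⁻¹ Off(A)`. -/
def jacobiMatrix {n : ℕ} (A : Matrix (Fin n) (Fin n) ℂ) : Matrix (Fin n) (Fin n) ℂ :=
  -((diagPart A)⁻¹ * offPart A)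

/-- Jacobi iterations `x^{(k+1)} = J x^{(k)} + b`, initialized at `x^{(0)} = b`. -/
def jacobiIter {n : ℕ} (J : Matrix (Fin n) (Fin n) ℂ) (b : Fin n → ℂ) : ℕ → (Fin n → ℂ)
  | 0 => b
  | (k+1) => J *ᵥ jacobiIter J b k + b

/-- The Jacobi approximation scheme: `ỹ₀ = f` and, for `j ≥ 1`, `ỹ_j` is the result of `K`
Jacobi iterations for the system `(hΔ+iI) y = (hΔ−iI) ỹ_{j-1}`, initialized at
`b_j = Diag(hΔ+iI)⁻¹ (hΔ−iI) ỹ_{j-1}`. -/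
def jacobiScheme {n : ℕ} (Δ : Matrix (Fin n) (Fin n) ℝ) (hz : ℝ) (K : ℕ)
    (f : Fin n → ℝ) : ℕ → (Fin n → ℂ)
  | 0 => fun i => (f i : ℂ)
  | (j+1) =>
      jacobiIter (jacobiMatrix (cayleyDen Δ hz))
        ((diagPart (cayleyDen Δ hz))⁻¹ *ᵥ (cayleyNum Δ hz *ᵥ jacobiScheme Δ hz K f j)) K

/-- The normalized Jacobi approximation scheme: as `jacobiScheme`, but each `ỹ_j` (`j ≥ 1`)
is rescaled so that `‖ỹ_j‖₂ = ‖f‖₂`. -/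
def jacobiSchemeN {n : ℕ} (Δ : Matrix (Fin n) (Fin n) ℝ) (hz : ℝ) (K : ℕ)
    (f : Fin n → ℝ) : ℕ → (Fin n → ℂ)
  | 0 => fun i => (f i : ℂ)
  | (j+1) =>
      let y := jacobiIter (jacobiMatrix (cayleyDen Δ hz))
        ((diagPart (cayleyDen Δ hz))⁻¹ *ᵥ (cayleyNum Δ hz *ᵥ jacobiSchemeN Δ hz K f j)) K
      (l2norm f / l2norm y) • y

/-- Approximate Cayley filter output `G̃f = c₀ ỹ₀ + 2 Re Σ_{j=1}^r c_j ỹ_j` (Jacobi scheme). -/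
def approxCayley {n : ℕ} (Δ : Matrix (Fin n) (Fin n) ℝ) (hz : ℝ) (r : ℕ)
    (c₀ : ℝ) (c : ℕ → ℂ) (K : ℕ) (f : Fin n → ℝ) : Fin n → ℝ :=
  fun i => c₀ * f i + 2 * (∑ j ∈ Finset.Icc 1 r, c j * jacobiScheme Δ hz K f j i).re

/-- Approximate Cayley filter output for the normalized Jacobi scheme. -/
def approxCayleyN {n : ℕ} (Δ : Matrix (Fin n) (Fin n) ℝ) (hz : ℝ) (r : ℕ)
    (c₀ : ℝ) (c : ℕ → ℂ) (K : ℕ) (f : Fin n → ℝ) : Fin n → ℝ :=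
  fun i => c₀ * f i + 2 * (∑ j ∈ Finset.Icc 1 r, c j * jacobiSchemeN Δ hz K f j i).re

/-- `k`-hop neighborhood of vertex `m` w.r.t. an adjacency relation `A`: all vertices reachable
from `m` by a path of at most `k` edges. -/
def khop {n : ℕ} (A : Fin n → Fin n → Prop) : ℕ → Fin n → Set (Fin n)
  | 0, m => {m}
  | (k+1), m => khop A k m ∪ {l | ∃ v ∈ khop A k m, A v l}

/-- Delta signal at vertex `m`. -/
def deltaSig {n : ℕ} (m : Fin n) : Fin n → ℝ :=
  fun i => if i = m then 1 else 0



namespace CayleyAux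

/-- Coefficientwise real part of a complex polynomial. -/
def reP (Q : Polynomial ℂ) : Polynomial ℝ :=
  ⟨AddMonoidAlgebra.ofCoeff (Q.toFinsupp.coeff.mapRange Complex.re Complex.zero_re)⟩

lemma reP_coeff (Q : Polynomial ℂ) (k : ℕ) : (reP Q).coeff k = (Q.coeff k).re := rfl

lemma reP_add (P Q : Polynomial ℂ) : reP (P + Q) = reP P + reP Q := by
  ext k; simp [reP_coeff]

lemma reP_C (z : ℂ) : reP (Polynomial.C z) = Polynomial.C z.re := by
  ext k; simp [reP_coeff, Polynomial.coeff_C]; split <;> simp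

lemma reP_monomial (k : ℕ) (c : ℂ) :
    reP (Polynomial.monomial k c) = Polynomial.monomial k c.re := by
  ext m; simp [reP_coeff, Polynomial.coeff_monomial]; split <;> simp

lemma reP_natDegree_le (Q : Polynomial ℂ) : (reP Q).natDegree ≤ Q.natDegree := by
  rw [Polynomial.natDegree_le_iff_coeff_eq_zero]
  intro N hN
  rw [reP_coeff, Polynomial.coeff_eq_zero_of_natDegree_lt hN]; simp

lemma cplx_pow_mulVec {n : ℕ} (Δ : Matrix (Fin n) (Fin n) ℝ) (f : Fin n → ℝ) (k : ℕ) :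
    cplx Δ ^ k *ᵥ (fun i => (f i : ℂ)) = fun i => (((Δ ^ k) *ᵥ f) i : ℂ) := by
  have h1 := map_pow (Complex.ofRealHom.mapMatrix (m := Fin n)) Δ k
  simp only [RingHom.mapMatrix_apply] at h1
  funext i
  have h2 := RingHom.map_mulVec Complex.ofRealHom (Δ ^ k) f i
  rw [h1] at h2
  exact h2.symm

lemma aeval_re {n : ℕ} (Δ : Matrix (Fin n) (Fin n) ℝ) (f : Fin n → ℝ) (Q : Polynomial ℂ)
    (i : Fin n) :
    ((Polynomial.aeval (cplx Δ) Q *ᵥ fun i => (f i : ℂ)) i).re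
      = (Polynomial.aeval Δ (reP Q) *ᵥ f) i := by
  induction Q using Polynomial.induction_on' with
  | add P Q hP hQ =>
      simp only [map_add, Matrix.add_mulVec, Pi.add_apply, Complex.add_re, reP_add, hP, hQ]
  | monomial k c =>
      rw [reP_monomial]
      simp only [Polynomial.aeval_monomial, Algebra.algebraMap_eq_smul_one, smul_mul_assoc,
        one_mul, Matrix.smul_mulVec, Pi.smul_apply, cplx_pow_mulVec, smul_eq_mul]
      simp [Complex.mul_re]

lemma sum_mulVec {n : ℕ} {ι : Type*} (s : Finset ι) (A : ι → Matrix (Fin n) (Fin n) ℂ)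
    (v : Fin n → ℂ) : (∑ j ∈ s, A j) *ᵥ v = ∑ j ∈ s, A j *ᵥ v := by
  induction s using Finset.cons_induction with
  | empty => simp [Matrix.zero_mulVec]
  | cons a s ha ih => simp [Finset.sum_cons, Matrix.add_mulVec, ih]

end CayleyAux

/-- For a `d`-regular graph and zero Jacobi iterations (`K = 0`):
`ỹ_j = ((hd + i)⁻¹ (hΔ − iI))^j f`; the approximate Cayley filter is a real polynomial in `Δ`
of degree at most `r`; and every real polynomial of `Δ` of degree at most `r` (such as a
Chebyshev filter) arises as such a zero-iteration Cayley filter. -/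
theorem approxCayley_zero_iterations_polynomial {n : ℕ} (W : Matrix (Fin n) (Fin n) ℝ)
    (hsym : W.IsSymm) (hnn : ∀ i j, 0 ≤ W i j) (hdiag : ∀ i, W i i = 0)
    (d : ℝ) (hreg : ∀ i, gDegree W i = d)
    (hz : ℝ) (hhz : 0 < hz) (r : ℕ) :
    (∀ (f : Fin n → ℝ) (j : ℕ), j ≤ r →
      jacobiScheme (unLaplacian W) hz 0 f j
        = ((((hz * d : ℝ) : ℂ) + Complex.I)⁻¹ • cayleyNum (unLaplacian W) hz) ^ j *ᵥ
            fun i => (f i : ℂ)) ∧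
    (∀ (c₀ : ℝ) (c : ℕ → ℂ), ∃ q : Polynomial ℝ, q.natDegree ≤ r ∧
      ∀ f : Fin n → ℝ,
        approxCayley (unLaplacian W) hz r c₀ c 0 f = Polynomial.aeval (unLaplacian W) q *ᵥ f) ∧
    (∀ q : Polynomial ℝ, q.natDegree ≤ r → ∃ (c₀ : ℝ) (c : ℕ → ℂ),
      ∀ f : Fin n → ℝ,
        approxCayley (unLaplacian W) hz r c₀ c 0 f = Polynomial.aeval (unLaplacian W) q *ᵥ f) := by
  classical
  set Δ := unLaplacian W with hΔdef
  set α : ℂ := ((hz * d : ℝ) : ℂ) + Complex.I with hαdef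
  have hα : α ≠ 0 := by
    intro h
    have := congrArg Complex.im h
    simp [hαdef] at this
  have hΔd : ∀ i, Δ i i = d := by
    intro i
    simp [hΔdef, unLaplacian, Matrix.sub_apply, Matrix.diagonal_apply_eq, hdiag i, hreg i]
  have hden : diagPart (cayleyDen Δ hz) = α • 1 := by
    ext i j
    simp only [diagPart, Matrix.diagonal_apply, Matrix.smul_apply, Matrix.one_apply,
      smul_eq_mul]
    by_cases h : i = j
    · subst h
      simp only [if_pos rfl, mul_one, cayleyDen, Matrix.add_apply, Matrix.smul_apply,
        Matrix.one_apply_eq, cplx, Matrix.map_apply, hΔd i, smul_eq_mul, hαdef]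
      push_cast
      ring
    · simp [h]
  have hone : ((α • 1 : Matrix (Fin n) (Fin n) ℂ)) * (α⁻¹ • 1) = 1 := by
    rw [smul_mul_assoc, mul_smul_comm, one_mul, smul_smul, mul_inv_cancel₀ hα, one_smul]
  have hinv : (diagPart (cayleyDen Δ hz))⁻¹ = α⁻¹ • 1 := by
    rw [hden]; exact Matrix.inv_eq_right_inv hone
  set M : Matrix (Fin n) (Fin n) ℂ := α⁻¹ • cayleyNum Δ hz with hMdef
  have h1 : ∀ (f : Fin n → ℝ) (j : ℕ),
      jacobiScheme Δ hz 0 f j = M ^ j *ᵥ fun i => (f i : ℂ) := by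
    intro f j
    induction j with
    | zero => simp [jacobiScheme]
    | succ j ih =>
        show jacobiIter _ ((diagPart (cayleyDen Δ hz))⁻¹ *ᵥ
          (cayleyNum Δ hz *ᵥ jacobiScheme Δ hz 0 f j)) 0 = _
        show (diagPart (cayleyDen Δ hz))⁻¹ *ᵥ (cayleyNum Δ hz *ᵥ jacobiScheme Δ hz 0 f j) = _
        rw [ih, hinv]
        simp [pow_succ', ← Matrix.mulVec_mulVec, hMdef, Matrix.smul_mulVec,
          Matrix.one_mulVec]
  set p : Polynomial ℂ := Polynomial.C (α⁻¹ * hz) * Polynomial.X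
      - Polynomial.C (α⁻¹ * Complex.I) with hpdef
  have hM : Polynomial.aeval (cplx Δ) p = M := by
    simp [hpdef, hMdef, cayleyNum, Algebra.algebraMap_eq_smul_one, smul_mul_assoc, one_mul,
      smul_sub, smul_smul, map_sub, _root_.map_mul, Polynomial.aeval_X, Polynomial.aeval_C,
      mul_comm]
  have hp1 : p.natDegree ≤ 1 := by
    rw [hpdef]; compute_degree
  have hpc : p.coeff 1 = α⁻¹ * hz := by
    simp [hpdef]
  have ha : (α⁻¹ * hz : ℂ) ≠ 0 :=
    mul_ne_zero (inv_ne_zero hα) (by exact_mod_cast hhz.ne')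
  set Qc : ℝ → (ℕ → ℂ) → Polynomial ℂ := fun c₀ c =>
    Polynomial.C (c₀ : ℂ) + Polynomial.C 2 * ∑ j ∈ Finset.Icc 1 r, Polynomial.C (c j) * p ^ j
    with hQcdef
  have hEval : ∀ (c₀ : ℝ) (c : ℕ → ℂ) (f : Fin n → ℝ),
      approxCayley Δ hz r c₀ c 0 f = Polynomial.aeval Δ (CayleyAux.reP (Qc c₀ c)) *ᵥ f := by
    intro c₀ c f
    funext i
    rw [← CayleyAux.aeval_re]
    have haev : Polynomial.aeval (cplx Δ) (Qc c₀ c)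
        = (c₀ : ℂ) • 1 + (2 : ℂ) • ∑ j ∈ Finset.Icc 1 r, c j • M ^ j := by
      simp [hQcdef, map_sum, _root_.map_mul, map_pow, hM, Polynomial.aeval_C,
        Algebra.algebraMap_eq_smul_one, smul_mul_assoc, one_mul, Finset.smul_sum, smul_smul]
    rw [haev]
    rw [Matrix.add_mulVec, Matrix.smul_mulVec, Matrix.smul_mulVec,
      Matrix.one_mulVec, CayleyAux.sum_mulVec]
    simp only [approxCayley, Pi.add_apply, Pi.smul_apply, Finset.sum_apply, smul_eq_mul,
      Matrix.smul_mulVec]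
    have hterm : ∀ j ∈ Finset.Icc 1 r,
        c j * jacobiScheme Δ hz 0 f j i = c j * ((M ^ j *ᵥ fun i => ((f i : ℂ))) i) := by
      intro j hj
      rw [h1 f j]
    rw [Finset.sum_congr rfl hterm]
    simp [Complex.add_re, Complex.mul_re]
  have hdeg : ∀ (c₀ : ℝ) (c : ℕ → ℂ), (CayleyAux.reP (Qc c₀ c)).natDegree ≤ r := by
    intro c₀ c
    refine (CayleyAux.reP_natDegree_le _).trans ?_
    refine (Polynomial.natDegree_add_le _ _).trans ?_
    simp only [Polynomial.natDegree_C, max_le_iff]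
    constructor
    · exact Nat.zero_le _
    · refine (Polynomial.natDegree_C_mul_le _ _).trans ?_
      refine Polynomial.natDegree_sum_le_of_forall_le _ _ ?_
      intro j hj
      refine (Polynomial.natDegree_C_mul_le _ _).trans ?_
      refine (Polynomial.natDegree_pow_le).trans ?_
      have hjr := (Finset.mem_Icc.mp hj).2
      calc j * p.natDegree ≤ j * 1 := Nat.mul_le_mul_left j hp1
        _ = j := mul_one j
        _ ≤ r := hjr
  refine ⟨fun f j _ => h1 f j, ?_, ?_⟩
  · intro c₀ c
    exact ⟨CayleyAux.reP (Qc c₀ c), hdeg c₀ c, hEval c₀ c⟩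
  · -- surjectivity
    have key : ∀ m : ℕ, m ≤ r → ∀ q : Polynomial ℝ, q.natDegree ≤ m →
        ∃ (c₀ : ℝ) (c : ℕ → ℂ), (∀ j, m < j → c j = 0) ∧ CayleyAux.reP (Qc c₀ c) = q := by
      intro m
      induction m with
      | zero =>
          intro _ q hq
          refine ⟨q.coeff 0, 0, fun j _ => rfl, ?_⟩
          have : Qc (q.coeff 0) 0 = Polynomial.C ((q.coeff 0 : ℝ) : ℂ) := by
            simp [hQcdef]
          rw [this, CayleyAux.reP_C, Complex.ofReal_re]
          exact (Polynomial.eq_C_of_natDegree_le_zero hq).symm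
      | succ m ih =>
          intro hm1 q hq
          set t : ℝ := q.coeff (m + 1) with htdef
          set cm : ℂ := (t : ℂ) / (2 * (α⁻¹ * hz) ^ (m + 1)) with hcmdef
          set g : Polynomial ℝ := CayleyAux.reP (Polynomial.C (2 * cm) * p ^ (m + 1))
            with hgdef
          have hptop : (p ^ (m + 1)).coeff (m + 1) = (α⁻¹ * hz) ^ (m + 1) := by
            have := Polynomial.coeff_pow_of_natDegree_le (m := m + 1) hp1
            rw [mul_one] at this
            rw [this, hpc]
          have hgtop : g.coeff (m + 1) = t := by
            rw [hgdef, CayleyAux.reP_coeff, Polynomial.coeff_C_mul, hptop]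
            have hA : (2 * (α⁻¹ * (hz : ℂ)) ^ (m + 1)) ≠ 0 :=
              mul_ne_zero two_ne_zero (pow_ne_zero _ ha)
            have h2cm : 2 * cm * (α⁻¹ * ↑hz) ^ (m + 1) = (t : ℂ) := by
              rw [hcmdef]
              calc 2 * ((t : ℂ) / (2 * (α⁻¹ * ↑hz) ^ (m + 1))) * (α⁻¹ * ↑hz) ^ (m + 1)
                  = (t : ℂ) * ((2 * (α⁻¹ * ↑hz) ^ (m + 1)) / (2 * (α⁻¹ * ↑hz) ^ (m + 1))) := by
                    ring
                _ = (t : ℂ) := by rw [div_self hA, mul_one]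
            rw [h2cm, Complex.ofReal_re]
          have hgsmall : ∀ N, m + 1 < N → g.coeff N = 0 := by
            intro N hN
            rw [hgdef, CayleyAux.reP_coeff, Polynomial.coeff_C_mul]
            have : (p ^ (m + 1)).coeff N = 0 := by
              apply Polynomial.coeff_eq_zero_of_natDegree_lt
              calc (p ^ (m + 1)).natDegree ≤ (m + 1) * p.natDegree :=
                    Polynomial.natDegree_pow_le
                _ ≤ (m + 1) * 1 := Nat.mul_le_mul_left _ hp1
                _ = m + 1 := mul_one _
                _ < N := hN
            rw [this, mul_zero, Complex.zero_re]
          have hq' : (q - g).natDegree ≤ m := by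
            rw [Polynomial.natDegree_le_iff_coeff_eq_zero]
            intro N hN
            rw [Polynomial.coeff_sub]
            rcases eq_or_lt_of_le (Nat.succ_le_of_lt hN) with h | h
            · rw [← h, hgtop, htdef, sub_self]
            · rw [hgsmall N h, Polynomial.coeff_eq_zero_of_natDegree_lt (lt_of_le_of_lt hq h),
                sub_zero]
          obtain ⟨c₀, c, hc0, hrep⟩ := ih (Nat.le_of_succ_le hm1) (q - g) hq'
          refine ⟨c₀, Function.update c (m + 1) cm, ?_, ?_⟩
          · intro j hj
            rw [Function.update_of_ne (by omega)]
            exact hc0 j (by omega)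
          · have hmem : m + 1 ∈ Finset.Icc 1 r := Finset.mem_Icc.mpr ⟨Nat.succ_le_succ (Nat.zero_le m), hm1⟩
            have hsum : (∑ j ∈ Finset.Icc 1 r, Polynomial.C (Function.update c (m + 1) cm j) * p ^ j)
                = Polynomial.C cm * p ^ (m + 1)
                  + ∑ j ∈ Finset.Icc 1 r, Polynomial.C (c j) * p ^ j := by
              rw [← Finset.add_sum_erase _ _ hmem, ← Finset.add_sum_erase _ _ hmem]
              rw [Function.update_self, hc0 (m + 1) (Nat.lt_succ_self m)]
              simp only [map_zero, zero_mul, add_zero, zero_add]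
              congr 1
              refine Finset.sum_congr rfl ?_
              intro j hj
              rw [Function.update_of_ne (Finset.ne_of_mem_erase hj)]
            have hQsplit : Qc c₀ (Function.update c (m + 1) cm)
                = Qc c₀ c + Polynomial.C (2 * cm) * p ^ (m + 1) := by
              simp only [hQcdef]
              rw [hsum, Polynomial.C_mul]
              ring
            rw [hQsplit, CayleyAux.reP_add, hrep, hgdef]
            ring
    intro q hq
    obtain ⟨c₀, c, _, hrep⟩ := key r le_rfl q hq
    exact ⟨c₀, c, fun f => by rw [hEval c₀ c f, hrep]⟩

end
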